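/- Let q = p^m be a power of a prime p and a ∈ F_{q²} with a^{q+1} = −1. Let L be an n×n unitary matrix over F_{q²} with rows L₁,…,Lₙ, and suppose α, β, γ, δ, λ, θ ∈ F_{q²} satisfy δ^{q+1} + (n+2) + γ^{q+1} = 0, θ^{q+1} + n·β^{q+1} + α^{q+1} + n·λ^{q+1} = 0, and θδ^q + (n+1)β + αγ^q + λa^q = 0 (integers read in F_{q²}). Then the code generated by the bordered matrix H (with first row (θ, β,…,β, α, λ(L₁+⋯+Lₙ)) and (i+1)-st row (δ, (Jₙ+Iₙ)ᵢ, γ, aLᵢ) for 1 ≤ i ≤ n) is a Hermitian self-orthogonal code of length 2n+2 and dimension at least n. Moreover, if δ = 0 and θ ≠ 0, then this code is Hermitian self-dual of length 2n+2 and dimension n+1. -/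

import Mathlib

open Matrix BigOperators Finset

/-- The Hermitian inner product `x * y = ∑ i, x i * (y i)^q` over `F_{q²}`. -/
def hermInner (q : ℕ) {F : Type} [CommRing F] {ι : Type} [Fintype ι]
    (x y : ι → F) : F :=
  ∑ i, x i * y i ^ q

/-- The Hermitian dual of a set of vectors. -/
def hermDual (q : ℕ) {F : Type} [CommRing F] {ι : Type} [Fintype ι]
    (C : Set (ι → F)) : Set (ι → F) :=
  {y | ∀ x ∈ C, hermInner q x y = 0}

/-- The code generated by a matrix: the span of its rows. -/
def rowSpan {F : Type} [Field F] {k : ℕ} {ι : Type} (G : Matrix (Fin k) ι F) :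
    Submodule F (ι → F) :=
  Submodule.span F (Set.range fun i => G i)
/-- Lemma 5 of the paper. For `a^{q+1} = -1`, `L` an `n×n` unitary
matrix, and `α, β, γ, δ, λ, θ` satisfying the three equations (with `Jₙ + Iₙ`),
the bordered matrix `H` generates a Hermitian self-orthogonal code of length
`2n+2` and dimension at least `n`; if moreover `δ = 0` and `θ ≠ 0`, the code is
Hermitian self-dual of dimension `n+1`. -/
theorem stmt13 (p m q n : ℕ) (hp : p.Prime) (hm : 0 < m) (hq : q = p ^ m)
    (F : Type) [Field F] [Fintype F] (hF : Fintype.card F = q ^ 2)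
    (a : F) (ha : a ^ (q + 1) = -1)
    (L : Matrix (Fin n) (Fin n) F) (hL : L * (L.map (· ^ q))ᵀ = 1)
    (α β γ δ lam θ : F)
    (h1 : δ ^ (q + 1) + ((n : F) + 2) + γ ^ (q + 1) = 0)
    (h2 : θ ^ (q + 1) + (n : F) * β ^ (q + 1) + α ^ (q + 1) + (n : F) * lam ^ (q + 1) = 0)
    (h3 : θ * δ ^ q + ((n : F) + 1) * β + α * γ ^ q + lam * a ^ q = 0)
    (H : Matrix (Fin (n + 1)) ((Unit ⊕ Fin n) ⊕ (Unit ⊕ Fin n)) F)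
    (hH1 : H 0 (Sum.inl (Sum.inl ())) = θ)
    (hH2 : ∀ j, H 0 (Sum.inl (Sum.inr j)) = β)
    (hH3 : H 0 (Sum.inr (Sum.inl ())) = α)
    (hH4 : ∀ j, H 0 (Sum.inr (Sum.inr j)) = lam * ∑ k, L k j)
    (hH5 : ∀ i : Fin n, H i.succ (Sum.inl (Sum.inl ())) = δ)
    (hH6 : ∀ i j : Fin n, H i.succ (Sum.inl (Sum.inr j)) = if j = i then 2 else 1)
    (hH7 : ∀ i : Fin n, H i.succ (Sum.inr (Sum.inl ())) = γ)
    (hH8 : ∀ i j : Fin n, H i.succ (Sum.inr (Sum.inr j)) = a * L i j) :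
    ((rowSpan H : Set ((Unit ⊕ Fin n) ⊕ (Unit ⊕ Fin n) → F)) ⊆ hermDual q (rowSpan H) ∧
      n ≤ Module.finrank F (rowSpan H)) ∧
    (δ = 0 → θ ≠ 0 →
      (rowSpan H : Set ((Unit ⊕ Fin n) ⊕ (Unit ⊕ Fin n) → F)) = hermDual q (rowSpan H) ∧
      Module.finrank F (rowSpan H) = n + 1) := by
  classical
  have hq1 : 1 < q := by
    rw [hq]; exact Nat.one_lt_pow (by omega) hp.one_lt
  -- characteristic
  have hcharP : CharP F p := by
    obtain ⟨k, hr, hcard⟩ := FiniteField.card F (ringChar F)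
    have hpr : ringChar F = p := by
      have hdvd : ringChar F ∣ p ^ (m * 2) := by
        rw [pow_mul, ← hq]
        rw [hF, hcard] at *
        exact dvd_pow_self _ (by positivity)
      exact ((Nat.prime_dvd_prime_iff_eq hr hp).mp (hr.dvd_of_dvd_pow hdvd))
    rw [← hpr]; exact ringChar.charP F
  haveI := hcharP
  haveI : ExpChar F p := ExpChar.prime hp
  set σ : F →+* F := iterateFrobenius F p m with hσdef
  have hσ : ∀ x : F, σ x = x ^ q := fun x => by
    rw [hσdef, iterateFrobenius_def, ← hq]
  have hσq : ∀ x : F, (x ^ q) ^ q = x := fun x => by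
    rw [← pow_mul, ← pow_two, ← hF]
    exact FiniteField.pow_card x
  have e2 : (2 : F) ^ q = 2 := by
    rw [← hσ]
    simpa using map_natCast σ 2
  have hqsum : ∀ f : Fin n → F, (∑ k, f k) ^ q = ∑ k, f k ^ q := fun f => by
    rw [← hσ, map_sum]; simp [hσ]
  have ha0 : a ≠ 0 := by
    intro h
    rw [h, zero_pow (by omega)] at ha
    exact one_ne_zero (by linear_combination ha : (1 : F) = 0)
  -- unitarity in coordinates
  have unit : ∀ i k, ∑ j, L i j * L k j ^ q = if i = k then 1 else 0 := by
    intro i k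
    have := congrFun (congrFun hL i) k
    simpa [Matrix.mul_apply, Matrix.one_apply] using this
  -- sum computations
  have SA : ∑ j, (∑ k, L k j) * (∑ k, L k j) ^ q = (n : F) := by
    calc ∑ j, (∑ k, L k j) * (∑ k, L k j) ^ q
        = ∑ j, ∑ k, ∑ k', L k j * L k' j ^ q := by
          refine Finset.sum_congr rfl fun j _ => ?_
          rw [hqsum, Finset.sum_mul_sum]
      _ = ∑ k, ∑ k', ∑ j, L k j * L k' j ^ q := by
          rw [Finset.sum_comm]
          exact Finset.sum_congr rfl fun k _ => Finset.sum_comm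
      _ = (n : F) := by simp [unit]
  have SB : ∀ i, ∑ j, (∑ k, L k j) * (L i j) ^ q = 1 := by
    intro i
    calc ∑ j, (∑ k, L k j) * (L i j) ^ q
        = ∑ k, ∑ j, L k j * L i j ^ q := by
          rw [Finset.sum_comm]
          exact Finset.sum_congr rfl fun j _ => by rw [Finset.sum_mul]
      _ = 1 := by simp [unit]
  have SC : ∀ i, ∑ j, L i j * (∑ k, L k j) ^ q = 1 := by
    intro i
    calc ∑ j, L i j * (∑ k, L k j) ^ q
        = ∑ k, ∑ j, L i j * L k j ^ q := by
          rw [Finset.sum_comm]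
          refine Finset.sum_congr rfl fun j _ => ?_
          rw [hqsum, Finset.mul_sum]
      _ = 1 := by simp [unit]
  have SI1 : ∀ i : Fin n, ∑ j : Fin n, (if j = i then (2:F) else 1) = (n : F) + 1 := by
    intro i
    have h : ∀ j : Fin n, (if j = i then (2:F) else 1) = 1 + (if j = i then 1 else 0) := by
      intro j; split <;> norm_num
    rw [Finset.sum_congr rfl fun j _ => h j, Finset.sum_add_distrib]
    simp [Finset.sum_ite_eq']
  have SI2 : ∀ i j : Fin n, ∑ t : Fin n, (if t = i then (2:F) else 1) * (if t = j then 2 else 1)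
      = (n:F) + 2 + (if i = j then 1 else 0) := by
    intro i j
    have h : ∀ t : Fin n, (if t = i then (2:F) else 1) * (if t = j then 2 else 1)
        = 1 + ((if t = i then 1 else 0) + (if t = j then 1 else 0)
          + (if t = i then (if i = j then (1:F) else 0) else 0)) := by
      intro t
      by_cases h1 : t = i <;> by_cases h2 : t = j <;> subst_vars <;> simp_all <;> norm_num
    rw [Finset.sum_congr rfl fun t _ => h t]
    simp [Finset.sum_add_distrib, Finset.sum_ite_eq']
    ring
  -- expansion of hermInner
  have hexp : ∀ x y : (Unit ⊕ Fin n) ⊕ (Unit ⊕ Fin n) → F,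
      hermInner q x y = x (.inl (.inl ())) * y (.inl (.inl ())) ^ q
        + ∑ j, x (.inl (.inr j)) * y (.inl (.inr j)) ^ q
        + (x (.inr (.inl ())) * y (.inr (.inl ())) ^ q
        + ∑ j, x (.inr (.inr j)) * y (.inr (.inr j)) ^ q) := by
    intro x y
    simp [hermInner, Fintype.sum_sum_type, add_assoc]
  have iteq : ∀ i j : Fin n, ((if j = i then (2:F) else 1)) ^ q = if j = i then 2 else 1 := by
    intro i j; split <;> simp [e2]
  -- orthogonality of rows
  have orth00 : hermInner q (H 0) (H 0) = 0 := by
    rw [hexp]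
    simp only [hH1, hH2, hH3, hH4]
    have t1 : ∑ _j : Fin n, β * β ^ q = (n : F) * (β * β ^ q) := by
      rw [Finset.sum_const]; simp [nsmul_eq_mul]
    have t2 : ∑ j, (lam * ∑ k, L k j) * (lam * ∑ k, L k j) ^ q
        = (lam * lam ^ q) * (n : F) := by
      have h : ∀ j, (lam * ∑ k, L k j) * (lam * ∑ k, L k j) ^ q
          = (lam * lam ^ q) * ((∑ k, L k j) * (∑ k, L k j) ^ q) := fun j => by
        rw [mul_pow]; ring
      rw [Finset.sum_congr rfl fun j _ => h j, ← Finset.mul_sum, SA]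
    rw [t1, t2]
    linear_combination h2
  have orth0s : ∀ i : Fin n, hermInner q (H 0) (H i.succ) = 0 := by
    intro i
    rw [hexp]
    simp only [hH1, hH2, hH3, hH4, hH5, hH6, hH7, hH8]
    have t1 : ∑ j, β * ((if j = i then (2:F) else 1)) ^ q = β * ((n:F) + 1) := by
      simp only [iteq]
      rw [← Finset.mul_sum, SI1]
    have t2 : ∑ j, (lam * ∑ k, L k j) * (a * L i j) ^ q = (lam * a ^ q) * 1 := by
      have h : ∀ j, (lam * ∑ k, L k j) * (a * L i j) ^ q
          = (lam * a ^ q) * ((∑ k, L k j) * (L i j) ^ q) := fun j => by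
        rw [mul_pow]; ring
      rw [Finset.sum_congr rfl fun j _ => h j, ← Finset.mul_sum, SB]
    rw [t1, t2]
    linear_combination h3
  have h3q : θ ^ q * δ + ((n:F) + 1) * β ^ q + α ^ q * γ + lam ^ q * a = 0 := by
    have h := congrArg σ h3
    simp only [map_add, _root_.map_mul, map_pow, _root_.map_one, map_natCast, map_zero] at h
    simp only [hσ] at h
    simp only [hσq] at h
    linear_combination h
  have orths0 : ∀ i : Fin n, hermInner q (H i.succ) (H 0) = 0 := by
    intro i
    rw [hexp]
    simp only [hH1, hH2, hH3, hH4, hH5, hH6, hH7, hH8]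
    have t1 : ∑ j, (if j = i then (2:F) else 1) * β ^ q = ((n:F) + 1) * β ^ q := by
      rw [← Finset.sum_mul, SI1]
    have t2 : ∑ j, (a * L i j) * (lam * ∑ k, L k j) ^ q = (a * lam ^ q) * 1 := by
      have h : ∀ j, (a * L i j) * (lam * ∑ k, L k j) ^ q
          = (a * lam ^ q) * (L i j * (∑ k, L k j) ^ q) := fun j => by
        rw [mul_pow]; ring
      rw [Finset.sum_congr rfl fun j _ => h j, ← Finset.mul_sum, SC]
    rw [t1, t2]
    linear_combination h3q
  have orthss : ∀ i j : Fin n, hermInner q (H i.succ) (H j.succ) = 0 := by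
    intro i j
    rw [hexp]
    simp only [hH1, hH2, hH3, hH4, hH5, hH6, hH7, hH8]
    have t1 : ∑ t, (if t = i then (2:F) else 1) * ((if t = j then (2:F) else 1)) ^ q
        = (n:F) + 2 + (if i = j then 1 else 0) := by
      simp only [iteq]
      exact SI2 i j
    have t2 : ∑ t, (a * L i t) * (a * L j t) ^ q
        = (a * a ^ q) * (if i = j then 1 else 0) := by
      have h : ∀ t, (a * L i t) * (a * L j t) ^ q
          = (a * a ^ q) * (L i t * (L j t) ^ q) := fun t => by
        rw [mul_pow]; ring
      rw [Finset.sum_congr rfl fun t _ => h t, ← Finset.mul_sum, unit]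
    rw [t1, t2]
    linear_combination h1 + (if i = j then (1:F) else 0) * ha
  have orth : ∀ i j : Fin (n+1), hermInner q (H i) (H j) = 0 := by
    intro i j
    rcases Fin.eq_zero_or_eq_succ i with hi | ⟨i', rfl⟩ <;>
      rcases Fin.eq_zero_or_eq_succ j with hj | ⟨j', rfl⟩
    · rw [hi, hj]; exact orth00
    · rw [hi]; exact orth0s j'
    · rw [hj]; exact orths0 i'
    · exact orthss i' j'
  -- linearity / semilinearity of hermInner
  have memrow : ∀ i, H i ∈ rowSpan H := fun i => Submodule.subset_span ⟨i, rfl⟩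
  have keyL : ∀ y : (Unit ⊕ Fin n) ⊕ (Unit ⊕ Fin n) → F,
      (∀ i, hermInner q (H i) y = 0) → ∀ x ∈ rowSpan H, hermInner q x y = 0 := by
    intro y hy x hx
    induction hx using Submodule.span_induction with
    | mem x hx => obtain ⟨i, rfl⟩ := hx; exact hy i
    | zero => simp [hermInner]
    | add u v hu hv hpu hpv =>
        have : hermInner q (u + v) y = hermInner q u y + hermInner q v y := by
          simp [hermInner, add_mul, Finset.sum_add_distrib]
        rw [this, hpu, hpv, add_zero]
    | smul c u hu hpu =>
        have : hermInner q (c • u) y = c * hermInner q u y := by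
          simp [hermInner, Finset.mul_sum, mul_add, mul_assoc]
        rw [this, hpu, mul_zero]
  have keyR : ∀ x : (Unit ⊕ Fin n) ⊕ (Unit ⊕ Fin n) → F,
      (∀ i, hermInner q x (H i) = 0) → ∀ y ∈ rowSpan H, hermInner q x y = 0 := by
    intro x hx y hy
    induction hy using Submodule.span_induction with
    | mem y hy => obtain ⟨i, rfl⟩ := hy; exact hx i
    | zero => simp [hermInner, zero_pow (show q ≠ 0 by omega)]
    | add u v hu hv hpu hpv =>
        have : hermInner q x (u + v) = hermInner q x u + hermInner q x v := by
          have hadd : ∀ s t : F, (s + t) ^ q = s ^ q + t ^ q := fun s t => by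
            rw [← hσ, ← hσ, ← hσ, map_add]
          simp [hermInner, hadd, mul_add, Finset.sum_add_distrib]
        rw [this, hpu, hpv, add_zero]
    | smul c u hu hpu =>
        have : hermInner q x (c • u) = c ^ q * hermInner q x u := by
          simp only [hermInner, Pi.smul_apply, smul_eq_mul, mul_pow, Finset.mul_sum]
          exact Finset.sum_congr rfl fun i _ => by ring
        rw [this, hpu, mul_zero]
  -- self-orthogonality
  have selfOrth : (rowSpan H : Set ((Unit ⊕ Fin n) ⊕ (Unit ⊕ Fin n) → F))
      ⊆ hermDual q (rowSpan H) := by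
    intro y hy x hx
    exact keyL y (fun i => keyR (H i) (orth i) y hy) x hx
  -- independence of the tail rows
  have tail_indep : LinearIndependent F (fun i : Fin n => H i.succ) := by
    rw [Fintype.linearIndependent_iff]
    intro g hg
    have hco : ∀ j : Fin n, ∑ i, g i * (a * L i j) = 0 := by
      intro j
      have := congrFun hg (Sum.inr (Sum.inr j))
      simpa [Finset.sum_apply, hH8] using this
    have hvm : Matrix.vecMul g L = 0 := by
      funext j
      have hj : a * ∑ i, g i * L i j = 0 := by
        rw [Finset.mul_sum, ← hco j]
        exact Finset.sum_congr rfl fun i _ => by ring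
      have := (mul_eq_zero.mp hj).resolve_left ha0
      simpa [Matrix.vecMul, dotProduct] using this
    haveI := invertibleOfRightInverse L _ hL
    have hg0 : g = 0 := by
      have h2' := congrArg (fun v => Matrix.vecMul v (⅟L)) hvm
      simpa [Matrix.vecMul_vecMul, Matrix.vecMul_one, Matrix.zero_vecMul] using h2'
    intro i; rw [hg0]; rfl
  have hFD : FiniteDimensional F ((Unit ⊕ Fin n) ⊕ (Unit ⊕ Fin n) → F) := by infer_instance
  have dim_ge : n ≤ Module.finrank F (rowSpan H) := by
    have hle : Submodule.span F (Set.range fun i : Fin n => H i.succ) ≤ rowSpan H := by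
      rw [Submodule.span_le]
      rintro _ ⟨i, rfl⟩
      exact memrow i.succ
    have := Submodule.finrank_mono hle
    rwa [finrank_span_eq_card tail_indep, Fintype.card_fin] at this
  refine ⟨⟨selfOrth, dim_ge⟩, ?_⟩
  intro hδ hθ
  -- full independence
  have all_indep : LinearIndependent F (fun i : Fin (n+1) => H i) := by
    rw [Fintype.linearIndependent_iff]
    intro g hg
    have hg0 : g 0 = 0 := by
      have h0 := congrFun hg (Sum.inl (Sum.inl ()))
      rw [Finset.sum_apply] at h0
      have : ∑ i : Fin (n+1), g i • H i (Sum.inl (Sum.inl ())) = g 0 * θ := by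
        rw [Fin.sum_univ_succ]
        simp [hH1, hH5, hδ]
      rw [show (0 : (Unit ⊕ Fin n) ⊕ (Unit ⊕ Fin n) → F) (Sum.inl (Sum.inl ())) = 0 from rfl] at h0
      have hgθ : g 0 * θ = 0 := by
        rw [← this]
        simpa using h0
      exact (mul_eq_zero.mp hgθ).resolve_right hθ
    have htail : ∀ i : Fin n, g i.succ = 0 := by
      have hg' : ∑ i : Fin n, g i.succ • H i.succ = 0 := by
        have := hg
        rw [Fin.sum_univ_succ, hg0, zero_smul, zero_add] at this
        exact this
      have := Fintype.linearIndependent_iff.mp tail_indep (fun i => g i.succ) hg'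
      exact this
    intro i
    rcases Fin.eq_zero_or_eq_succ i with hi | ⟨i', rfl⟩
    · rw [hi]; exact hg0
    · exact htail i'
  have dim_eq : Module.finrank F (rowSpan H) = n + 1 := by
    have : rowSpan H = Submodule.span F (Set.range fun i : Fin (n+1) => H i) := rfl
    rw [this, finrank_span_eq_card all_indep, Fintype.card_fin]
  refine ⟨?_, dim_eq⟩
  -- cardinality argument for self-duality
  have cardsub : ∀ W : Submodule F ((Unit ⊕ Fin n) ⊕ (Unit ⊕ Fin n) → F),
      (W : Set ((Unit ⊕ Fin n) ⊕ (Unit ⊕ Fin n) → F)).ncard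
        = Fintype.card F ^ Module.finrank F W := by
    intro W
    letI : Fintype W := Fintype.ofFinite W
    rw [← Nat.card_coe_set_eq, Nat.card_eq_fintype_card]
    exact Module.card_eq_pow_finrank
  -- the dual as a preimage of a kernel
  set ψ : ((Unit ⊕ Fin n) ⊕ (Unit ⊕ Fin n) → F) → ((Unit ⊕ Fin n) ⊕ (Unit ⊕ Fin n) → F) :=
    fun v i => v i ^ q with hψdef
  have ψinj : Function.Injective ψ := by
    intro u v huv
    funext i
    have h := congrFun huv i
    have h2' := congrArg (· ^ q) h
    simpa [hψdef, hσq] using h2'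
  have dualChar : hermDual q ((rowSpan H : Set ((Unit ⊕ Fin n) ⊕ (Unit ⊕ Fin n) → F)))
      = ψ ⁻¹' (LinearMap.ker H.mulVecLin : Set ((Unit ⊕ Fin n) ⊕ (Unit ⊕ Fin n) → F)) := by
    ext y
    have hcoord : ∀ i, H.mulVecLin (ψ y) i = hermInner q (H i) y := by
      intro i
      simp [hermInner, Matrix.mulVecLin, Matrix.mulVec, dotProduct, hψdef]
    constructor
    · intro hy
      show ψ y ∈ LinearMap.ker H.mulVecLin
      rw [LinearMap.mem_ker]
      funext i
      rw [hcoord i]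
      exact hy (H i) (memrow i)
    · intro hy x hx
      refine keyL y ?_ x hx
      intro i
      rw [← hcoord i]
      have hy0 : H.mulVecLin (ψ y) = 0 := hy
      rw [hy0]; rfl
  have hψbij : Function.Bijective ψ := Finite.injective_iff_bijective.mp ψinj
  set e : ((Unit ⊕ Fin n) ⊕ (Unit ⊕ Fin n) → F) ≃ ((Unit ⊕ Fin n) ⊕ (Unit ⊕ Fin n) → F) :=
    Equiv.ofBijective ψ hψbij with hedef
  have hpre : ψ ⁻¹' (LinearMap.ker H.mulVecLin : Set ((Unit ⊕ Fin n) ⊕ (Unit ⊕ Fin n) → F))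
      = e.symm '' (LinearMap.ker H.mulVecLin : Set ((Unit ⊕ Fin n) ⊕ (Unit ⊕ Fin n) → F)) := by
    rw [Equiv.image_eq_preimage_symm, Equiv.symm_symm]
    rfl
  have hrkdef : H.rank = Module.finrank F (LinearMap.range H.mulVecLin) := rfl
  have hrk : Module.finrank F (LinearMap.range H.mulVecLin) = n + 1 := by
    rw [← hrkdef, Matrix.rank_eq_finrank_span_row]
    exact dim_eq
  have hkerfr : Module.finrank F (LinearMap.ker H.mulVecLin) = n + 1 := by
    have hrn := LinearMap.finrank_range_add_finrank_ker H.mulVecLin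
    rw [hrk, Module.finrank_pi] at hrn
    simp only [Fintype.card_sum, Fintype.card_unit, Fintype.card_fin] at hrn
    omega
  have hcardD : (hermDual q ((rowSpan H : Set ((Unit ⊕ Fin n) ⊕ (Unit ⊕ Fin n) → F)))).ncard
      = Fintype.card F ^ (n + 1) := by
    rw [dualChar, hpre, Set.ncard_image_of_injective _ e.symm.injective, cardsub, hkerfr]
  have hcardC : ((rowSpan H : Set ((Unit ⊕ Fin n) ⊕ (Unit ⊕ Fin n) → F))).ncard
      = Fintype.card F ^ (n + 1) := by
    rw [cardsub, dim_eq]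
  exact Set.eq_of_subset_of_ncard_le selfOrth (le_of_eq (by rw [hcardD, hcardC])) (Set.toFinite _)
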